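/- arXiv:1403.7640 — 3 statements merged into one kernel-verified Lean document; each statement's English description precedes it below -/
import Mathlib

section
/- Let Φ : [0,1] → ℝ be strictly convex, let u be an m×m unitary matrix, and let n_1,...,n_m ∈ [0,1]. If equality holds in sum_i Φ(sum_j |u_{ij}|² n_j) ≤ sum_j Φ(n_j), then for every i there exists a value c_i such that u_{ij} = 0 whenever n_j ≠ c_i, and sum_j |u_{ij}|² n_j = c_i. -/
theorem doubly_stochastic_jensen_equality_case (m : ℕ) (Φ : ℝ → ℝ)
    (hΦ : StrictConvexOn ℝ (Set.Icc (0:ℝ) 1) Φ)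
    (u : Matrix (Fin m) (Fin m) ℂ) (hu : u ∈ Matrix.unitaryGroup (Fin m) ℂ)
    (n : Fin m → ℝ) (hn : ∀ j, n j ∈ Set.Icc (0:ℝ) 1)
    (heq : ∑ i, Φ (∑ j, ‖u i j‖ ^ 2 * n j) = ∑ j, Φ (n j)) :
    ∀ i, ∃ c : ℝ, (∀ j, n j ≠ c → u i j = 0) ∧ ∑ j, ‖u i j‖ ^ 2 * n j = c := by
  classical
  set w : Fin m → Fin m → ℝ := fun i j => ‖u i j‖ ^ 2 with hw
  have hw0 : ∀ i j, 0 ≤ w i j := fun i j => sq_nonneg _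
  -- row sums
  have hmul : u * star u = 1 := hu.2
  have hmul' : star u * u = 1 := hu.1
  have hrow : ∀ i, ∑ j, w i j = 1 := by
    intro i
    have h := congrFun (congrFun hmul i) i
    simp only [Matrix.mul_apply, Matrix.one_apply_eq, Matrix.star_apply] at h
    have h2 : ∑ j, ((‖u i j‖ ^ 2 : ℝ) : ℂ) = 1 := by
      rw [← h]
      refine Finset.sum_congr rfl fun j _ => ?_
      rw [RCLike.star_def, Complex.mul_conj, Complex.sq_norm]
    have h3 : ((∑ j, w i j : ℝ) : ℂ) = 1 := by push_cast; exact h2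
    exact_mod_cast h3
  have hcol : ∀ j, ∑ i, w i j = 1 := by
    intro j
    have h := congrFun (congrFun hmul' j) j
    simp only [Matrix.mul_apply, Matrix.one_apply_eq, Matrix.star_apply] at h
    have h2 : ∑ i, ((‖u i j‖ ^ 2 : ℝ) : ℂ) = 1 := by
      rw [← h]
      refine Finset.sum_congr rfl fun i _ => ?_
      rw [mul_comm, RCLike.star_def, Complex.mul_conj, Complex.sq_norm]
    have h3 : ((∑ i, w i j : ℝ) : ℂ) = 1 := by push_cast; exact h2
    exact_mod_cast h3
  -- per-row Jensen
  have hjensen : ∀ i, Φ (∑ j, w i j * n j) ≤ ∑ j, w i j * Φ (n j) := by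
    intro i
    have := hΦ.convexOn.map_sum_le (t := Finset.univ) (w := w i) (p := n)
      (fun j _ => hw0 i j) (hrow i) (fun j _ => hn j)
    simpa [smul_eq_mul] using this
  -- total
  have htot : ∑ i, ∑ j, w i j * Φ (n j) = ∑ j, Φ (n j) := by
    rw [Finset.sum_comm]
    refine Finset.sum_congr rfl fun j _ => ?_
    rw [← Finset.sum_mul, hcol j, one_mul]
  have heach : ∀ i, Φ (∑ j, w i j * n j) = ∑ j, w i j * Φ (n j) := by
    have hsum : ∑ i, Φ (∑ j, w i j * n j) = ∑ i, ∑ j, w i j * Φ (n j) := by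
      rw [htot]; exact heq
    intro i
    exact (Finset.sum_eq_sum_iff_of_le (fun i _ => hjensen i)).mp hsum i (Finset.mem_univ i)
  intro i
  refine ⟨∑ j, w i j * n j, ?_, rfl⟩
  intro j hj
  have := (hΦ.map_sum_eq_iff' (t := Finset.univ) (w := w i) (p := n)
    (fun j _ => hw0 i j) (hrow i) (fun j _ => hn j)).mp (by simpa [smul_eq_mul] using heach i)
  by_contra hu0
  have hwne : w i j ≠ 0 := by
    simp only [hw, ne_eq, pow_eq_zero_iff, norm_eq_zero]
    exact fun h => hu0 (by simpa using h)
  have := this j (Finset.mem_univ j) hwne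
  exact hj (by simpa [smul_eq_mul] using this)
end

section
/- Let q be a probability distribution on ℕ^m with finite mean occupations n_i = sum_n n(i) q(n), and finite Shannon entropy. Among all product geometric distributions p(n) = prod_i (1−z_i) z_i^{n(i)} with z_i ∈ [0,1), the Kullback–Leibler divergence D(q ‖ p) is minimized by the choice z_i = n_i/(1+n_i), and the minimum value equals sum_i [(1+n_i) log(1+n_i) − n_i log n_i] + sum_n q(n) log q(n). -/
/-- Kullback–Leibler summand in the extended reals, with conventions
`0 log 0 = 0` and `q log(q/0) = ⊤` for `q > 0`. -/
noncomputable def klTerm (q p : ℝ) : EReal :=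
  if q = 0 then 0 else if p = 0 then ⊤ else ((q * Real.log (q / p) : ℝ) : EReal)

/-- Product geometric distribution on occupation lists `ℕ^m` with parameters `z i`. -/
noncomputable def prodGeometric {m : ℕ} (z : Fin m → ℝ) : (Fin m → ℕ) → ℝ :=
  fun n => ∏ i, (1 - z i) * (z i) ^ (n i)

/-- The coercion `ℝ → EReal` as an additive monoid hom. -/
noncomputable def realToEReal : ℝ →+ EReal where
  toFun x := (x : EReal)
  map_zero' := by simp
  map_add' a b := EReal.coe_add a b

lemma hasSum_ereal_coe {ι : Type*} {f : ι → ℝ} {a : ℝ} (h : HasSum f a) :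
    HasSum (fun n => ((f n : ℝ) : EReal)) ((a : ℝ) : EReal) := by
  have := ((continuous_coe_real_ereal).tendsto a).comp h
  refine this.congr fun s => ?_
  simp only [Function.comp]
  exact map_sum realToEReal f s

lemma ereal_sum_ne_bot {ι : Type*} (f : ι → EReal) (h : ∀ n, f n ≠ ⊥) (s : Finset ι) :
    ∑ n ∈ s, f n ≠ ⊥ := by
  classical
  induction s using Finset.induction_on with
  | empty => simp
  | insert a s hx ih =>
    rw [Finset.sum_insert hx]
    simp only [ne_eq, EReal.add_eq_bot_iff]
    tauto

lemma ereal_tsum_eq_top {ι : Type*} {f : ι → EReal} (h : ∀ n, f n ≠ ⊥) (n₀ : ι)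
    (h0 : f n₀ = ⊤) : ∑' n, f n = ⊤ := by
  classical
  have hs : HasSum f ⊤ := by
    have hev : (fun s : Finset ι => ∑ n ∈ s, f n) =ᶠ[Filter.atTop] (fun _ => (⊤ : EReal)) := by
      refine Filter.eventually_atTop.2 ⟨{n₀}, fun s hs => ?_⟩
      have hn₀ : n₀ ∈ s := hs (Finset.mem_singleton_self n₀)
      show ∑ n ∈ s, f n = ⊤
      rw [← Finset.add_sum_erase s f hn₀, h0,
        EReal.top_add_of_ne_bot (ereal_sum_ne_bot f h _)]
    exact (tendsto_const_nhds.congr' hev.symm)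
  exact hs.tsum_eq

lemma klTerm_ne_bot (q p : ℝ) : klTerm q p ≠ ⊥ := by
  rw [klTerm]
  split_ifs
  · simp
  · simp
  · exact EReal.coe_ne_bot _

lemma onePlus_pos {t : ℝ} (ht : 0 ≤ t) : (0:ℝ) < 1 + t := by linarith

lemma zstar_eq {t : ℝ} (ht : 0 ≤ t) : 1 - t / (1 + t) = 1 / (1 + t) := by
  have := (onePlus_pos ht).ne'
  field_simp
  ring

lemma coord_eq {t : ℝ} (ht : 0 ≤ t) :
    Real.log (1 - t / (1 + t)) + t * Real.log (t / (1 + t)) =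
      -((1 + t) * Real.log (1 + t) - t * Real.log t) := by
  have h1 : (0:ℝ) < 1 + t := onePlus_pos ht
  rw [zstar_eq ht]
  rcases eq_or_lt_of_le ht with h | h
  · simp [← h]
  · rw [Real.log_div (ne_of_gt h) h1.ne', one_div, Real.log_inv]
    ring

lemma coord_min {t z : ℝ} (ht : 0 ≤ t) (hz0 : 0 ≤ z) (hz1 : z < 1) (h0 : z = 0 → t = 0) :
    Real.log (1 - z) + t * Real.log z ≤
      Real.log (1 - t / (1 + t)) + t * Real.log (t / (1 + t)) := by
  have h1 : (0:ℝ) < 1 + t := onePlus_pos ht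
  rcases eq_or_lt_of_le ht with h | h
  · rw [← h]
    simp only [zero_mul, add_zero, zero_div]
    have : Real.log (1 - z) ≤ 0 := Real.log_nonpos (by linarith) (by linarith)
    simpa using this
  · have hzpos : 0 < z := by
      rcases eq_or_lt_of_le hz0 with h' | h'
      · exact absurd (h0 h'.symm) (ne_of_gt h)
      · exact h'
    have hzs : 0 < t / (1 + t) := div_pos h h1
    have hzs1 : 1 - t / (1 + t) = 1 / (1 + t) := zstar_eq ht
    have hA : Real.log ((1 - z) / (1 - t / (1 + t))) ≤ (1 - z) / (1 - t / (1 + t)) - 1 :=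
      Real.log_le_sub_one_of_pos (div_pos (by linarith) (by rw [hzs1]; positivity))
    have hB : Real.log (z / (t / (1 + t))) ≤ z / (t / (1 + t)) - 1 :=
      Real.log_le_sub_one_of_pos (div_pos hzpos hzs)
    have hB' : t * Real.log (z / (t / (1 + t))) ≤ t * (z / (t / (1 + t)) - 1) :=
      mul_le_mul_of_nonneg_left hB ht
    have key : (1 - z) / (1 - t / (1 + t)) - 1 + t * (z / (t / (1 + t)) - 1) = 0 := by
      rw [hzs1]
      field_simp
      ring
    rw [Real.log_div (by linarith) (by rw [hzs1]; positivity)] at hA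
    rw [Real.log_div hzpos.ne' hzs.ne'] at hB'
    linarith

/-- Evaluation of the KL sum for a product geometric with parameters compatible with
the support of `q`. -/
lemma kl_eval (m : ℕ) (q : (Fin m → ℕ) → ℝ) (hq0 : ∀ n, 0 ≤ q n) (hq1 : HasSum q 1)
    (nbar : Fin m → ℝ)
    (hmean : ∀ i, HasSum (fun n : Fin m → ℕ => (n i : ℝ) * q n) (nbar i))
    (hent : Summable (fun n : Fin m → ℕ => q n * Real.log (q n)))
    (z : Fin m → ℝ) (hz : ∀ i, 0 ≤ z i ∧ z i < 1) (hz0 : ∀ i, z i = 0 → nbar i = 0) :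
    HasSum (fun n => klTerm (q n) (prodGeometric z n))
      ((((∑' n : Fin m → ℕ, q n * Real.log (q n)) -
        ∑ i, (Real.log (1 - z i) + nbar i * Real.log (z i)) : ℝ)) : EReal) := by
  classical
  have hsupp : ∀ i, nbar i = 0 → ∀ n : Fin m → ℕ, q n ≠ 0 → n i = 0 := by
    intro i hi n hn
    have h0 : HasSum (fun n : Fin m → ℕ => (n i : ℝ) * q n) 0 := hi ▸ hmean i
    have hall := (hasSum_zero_iff_of_nonneg
      (fun n => mul_nonneg (Nat.cast_nonneg _) (hq0 n))).1 h0
    have hzn : (n i : ℝ) * q n = 0 := congrFun hall n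
    rcases mul_eq_zero.1 hzn with h | h
    · exact_mod_cast h
    · exact absurd h hn
  set g : (Fin m → ℕ) → ℝ := fun n =>
    q n * Real.log (q n) -
      ∑ i, (Real.log (1 - z i) * q n + Real.log (z i) * ((n i : ℝ) * q n)) with hg
  have hpt : ∀ n, klTerm (q n) (prodGeometric z n) = ((g n : ℝ) : EReal) := by
    intro n
    by_cases hqn : q n = 0
    · simp [klTerm, hg, hqn]
    · have hpow : ∀ i : Fin m, 0 < (z i) ^ (n i) := by
        intro i
        rcases eq_or_lt_of_le (hz i).1 with h | h
        · have : n i = 0 := hsupp i (hz0 i h.symm) n hqn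
          rw [this, ← h]; norm_num
        · exact pow_pos h _
      have hfac : ∀ i : Fin m, 0 < (1 - z i) * (z i) ^ (n i) := fun i =>
        mul_pos (by linarith [(hz i).2]) (hpow i)
      have hp : 0 < prodGeometric z n := Finset.prod_pos (fun i _ => hfac i)
      have hlogp : Real.log (prodGeometric z n) =
          ∑ i, (Real.log (1 - z i) + (n i : ℝ) * Real.log (z i)) := by
        rw [prodGeometric, Real.log_prod (fun i _ => (hfac i).ne')]
        refine Finset.sum_congr rfl fun i _ => ?_
        rw [Real.log_mul (by linarith [(hz i).2] : (1:ℝ) - z i ≠ 0) (hpow i).ne',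
          Real.log_pow]
      rw [klTerm, if_neg hqn, if_neg hp.ne']
      congr 1
      rw [Real.log_div hqn hp.ne', hlogp, hg, mul_sub, Finset.mul_sum]
      congr 1
      refine Finset.sum_congr rfl fun i _ => ?_
      ring
  have hterm : ∀ i : Fin m,
      HasSum (fun n : Fin m → ℕ =>
          Real.log (1 - z i) * q n + Real.log (z i) * ((n i : ℝ) * q n))
        (Real.log (1 - z i) + nbar i * Real.log (z i)) := by
    intro i
    have h := (hq1.mul_left (Real.log (1 - z i))).add ((hmean i).mul_left (Real.log (z i)))
    have hval : Real.log (1 - z i) * 1 + Real.log (z i) * nbar i =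
        Real.log (1 - z i) + nbar i * Real.log (z i) := by ring
    rw [← hval]
    exact h
  have hg' : HasSum g ((∑' n : Fin m → ℕ, q n * Real.log (q n)) -
      ∑ i, (Real.log (1 - z i) + nbar i * Real.log (z i))) :=
    hent.hasSum.sub (hasSum_sum (fun i _ => hterm i))
  have heq : (fun n => klTerm (q n) (prodGeometric z n)) =
      fun n => ((g n : ℝ) : EReal) := funext hpt
  rw [heq]
  exact hasSum_ereal_coe hg'

theorem product_geometric_minimizes_kl (m : ℕ)
    (q : (Fin m → ℕ) → ℝ) (hq0 : ∀ n, 0 ≤ q n) (hq1 : HasSum q 1)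
    (nbar : Fin m → ℝ)
    (hmean : ∀ i, HasSum (fun n : Fin m → ℕ => (n i : ℝ) * q n) (nbar i))
    (hent : Summable (fun n : Fin m → ℕ => q n * Real.log (q n))) :
    (∀ z : Fin m → ℝ, (∀ i, z i ∈ Set.Ico (0:ℝ) 1) →
      ∑' n : Fin m → ℕ, klTerm (q n) (prodGeometric (fun i => nbar i / (1 + nbar i)) n) ≤
        ∑' n : Fin m → ℕ, klTerm (q n) (prodGeometric z n)) ∧
    ∑' n : Fin m → ℕ, klTerm (q n) (prodGeometric (fun i => nbar i / (1 + nbar i)) n) =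
      (((∑ i, ((1 + nbar i) * Real.log (1 + nbar i) - nbar i * Real.log (nbar i))) +
        ∑' n : Fin m → ℕ, q n * Real.log (q n) : ℝ) : EReal) := by
  classical
  have hnb : ∀ i, 0 ≤ nbar i := by
    intro i
    exact hasSum_le (fun n => mul_nonneg (Nat.cast_nonneg _) (hq0 n)) hasSum_zero (hmean i)
  set zs : Fin m → ℝ := fun i => nbar i / (1 + nbar i) with hzs
  have hzs_mem : ∀ i, 0 ≤ zs i ∧ zs i < 1 := by
    intro i
    have h1 : (0:ℝ) < 1 + nbar i := onePlus_pos (hnb i)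
    constructor
    · exact div_nonneg (hnb i) h1.le
    · rw [div_lt_one h1]; linarith
  have hzs0 : ∀ i, zs i = 0 → nbar i = 0 := by
    intro i h
    have h1 : (0:ℝ) < 1 + nbar i := onePlus_pos (hnb i)
    rcases div_eq_zero_iff.1 h with h' | h'
    · exact h'
    · exact absurd h' h1.ne'
  have hstar := kl_eval m q hq0 hq1 nbar hmean hent zs hzs_mem hzs0
  have hstar_tsum := hstar.tsum_eq
  have hvalstar : (∑' n : Fin m → ℕ, q n * Real.log (q n)) -
      ∑ i, (Real.log (1 - zs i) + nbar i * Real.log (zs i)) =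
      (∑ i, ((1 + nbar i) * Real.log (1 + nbar i) - nbar i * Real.log (nbar i))) +
        ∑' n : Fin m → ℕ, q n * Real.log (q n) := by
    have : ∀ i : Fin m, Real.log (1 - zs i) + nbar i * Real.log (zs i) =
        -((1 + nbar i) * Real.log (1 + nbar i) - nbar i * Real.log (nbar i)) :=
      fun i => coord_eq (hnb i)
    rw [Finset.sum_congr rfl (fun i _ => this i), Finset.sum_neg_distrib]
    ring
  constructor
  · intro z hz
    by_cases hcase : ∀ i, z i = 0 → nbar i = 0
    · have hzmem : ∀ i, 0 ≤ z i ∧ z i < 1 := fun i => ⟨(hz i).1, (hz i).2⟩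
      have hZ := kl_eval m q hq0 hq1 nbar hmean hent z hzmem hcase
      rw [hstar_tsum, hZ.tsum_eq]
      rw [EReal.coe_le_coe_iff]
      have : ∀ i : Fin m, Real.log (1 - z i) + nbar i * Real.log (z i) ≤
          Real.log (1 - zs i) + nbar i * Real.log (zs i) :=
        fun i => coord_min (hnb i) (hz i).1 (hz i).2 (hcase i)
      have hsum := Finset.sum_le_sum (fun i (_ : i ∈ Finset.univ) => this i)
      linarith
    · push_neg at hcase
      obtain ⟨i, hzi, hnbi⟩ := hcase
      have hex : ∃ n : Fin m → ℕ, (n i : ℝ) * q n ≠ 0 := by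
        by_contra hno
        push_neg at hno
        have : (fun n : Fin m → ℕ => (n i : ℝ) * q n) = fun _ => 0 := funext hno
        have := (this ▸ hmean i).unique hasSum_zero
        exact hnbi this
      obtain ⟨n₀, hn₀⟩ := hex
      have hqn₀ : q n₀ ≠ 0 := fun h => hn₀ (by rw [h, mul_zero])
      have hni : n₀ i ≠ 0 := by
        intro h
        exact hn₀ (by rw [h]; simp)
      have hpn₀ : prodGeometric z n₀ = 0 := by
        rw [prodGeometric]
        refine Finset.prod_eq_zero (Finset.mem_univ i) ?_
        rw [hzi, zero_pow hni, mul_zero]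
      have htop : klTerm (q n₀) (prodGeometric z n₀) = ⊤ := by
        rw [klTerm, if_neg hqn₀, if_pos hpn₀]
      rw [ereal_tsum_eq_top (fun n => klTerm_ne_bot _ _) n₀ htop]
      exact le_top
  · rw [hstar_tsum, hvalstar]
end

section
/- For a pure n-boson state with n ≥ 1, the nonfreeness sum_i (1+n_i) log(1+n_i) − sum_i n_i log n_i (where n_i ≥ 0 are the natural occupation numbers with sum_i n_i = n) is strictly positive, and among all occupation-number sequences with sum n, it is minimized by concentrating all occupation in a single mode (n_1 = n, all others 0), giving minimum value (1+n) log(1+n) − n log n. -/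
open Real

noncomputable def Fb (x : ℝ) : ℝ := (1 + x) * Real.log (1 + x) - x * Real.log x

lemma Fb_hasDeriv {x : ℝ} (hx : 0 < x) :
    HasDerivAt Fb (Real.log (1 + x) - Real.log x) x := by
  have h1 : HasDerivAt (fun y : ℝ => (1 + y)) 1 x := by
    simpa using (hasDerivAt_id x).const_add 1
  have h2 : HasDerivAt (fun y : ℝ => (1 + y) * Real.log (1 + y))
      ((Real.log (1 + x) + 1) * 1) x :=
    (Real.hasDerivAt_mul_log (by linarith)).comp x h1
  have h3 : HasDerivAt (fun y : ℝ => y * Real.log y) (Real.log x + 1) x :=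
    Real.hasDerivAt_mul_log hx.ne'
  exact (h2.sub h3).congr_deriv (by ring)

lemma Fb_strictMono : StrictMonoOn Fb (Set.Ici (0 : ℝ)) := by
  have hc : ContinuousOn Fb (Set.Ici 0) := by
    apply ContinuousOn.sub
    · exact ((Real.continuous_mul_log).comp (continuous_const.add continuous_id)).continuousOn
    · exact Real.continuous_mul_log.continuousOn
  refine strictMonoOn_of_deriv_pos (convex_Ici 0) hc ?_
  intro x hx
  rw [interior_Ici] at hx
  rw [(Fb_hasDeriv hx).deriv]
  have : Real.log x < Real.log (1 + x) := Real.log_lt_log hx (by linarith)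
  linarith

lemma Fb_zero : Fb 0 = 0 := by simp [Fb]

lemma Fb_nonneg {x : ℝ} (hx : 0 ≤ x) : 0 ≤ Fb x := by
  rcases eq_or_lt_of_le hx with h | h
  · simp [← h, Fb_zero]
  · have := Fb_strictMono (Set.self_mem_Ici) (le_of_lt h : (0:ℝ) ≤ x) h
    simpa [Fb_zero] using this.le

lemma Fb_inv {x : ℝ} (hx : 0 < x) : Fb x = x * Fb (1/x) := by
  have h1 : Real.log (1 + 1/x) = Real.log (x + 1) - Real.log x := by
    rw [show (1 + 1/x) = (x+1)/x by field_simp, Real.log_div (by linarith) hx.ne']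
  have h2 : Real.log (1/x) = -Real.log x := by simp
  simp only [Fb, h1, h2]
  field_simp
  ring

lemma Fb_chord {x n : ℝ} (hx : 0 < x) (hxn : x ≤ n) : (x / n) * Fb n ≤ Fb x := by
  have hn : 0 < n := lt_of_lt_of_le hx hxn
  have hmono : Fb (1/n) ≤ Fb (1/x) := by
    rcases eq_or_lt_of_le hxn with h | h
    · simp [h]
    · exact (Fb_strictMono (le_of_lt (by positivity) : (0:ℝ) ≤ 1/n)
        (le_of_lt (by positivity) : (0:ℝ) ≤ 1/x)
        (by exact one_div_lt_one_div_of_lt hx h)).le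
  have := mul_le_mul_of_nonneg_left hmono hx.le
  rw [← Fb_inv hx] at this
  calc (x / n) * Fb n = x * (Fb n / n) := by ring
    _ = x * Fb (1/n) := by rw [Fb_inv hn]; field_simp
    _ ≤ Fb x := this

theorem pure_boson_nonfreeness_positive_and_minimized (n : ℕ) (hn : 1 ≤ n)
    (occ : ℕ → ℝ) (h0 : ∀ i, 0 ≤ occ i) (hsum : HasSum occ (n : ℝ)) :
    0 < ∑' i, ENNReal.ofReal
        ((1 + occ i) * Real.log (1 + occ i) - occ i * Real.log (occ i)) ∧
    ENNReal.ofReal ((1 + (n : ℝ)) * Real.log (1 + (n : ℝ)) - (n : ℝ) * Real.log (n : ℝ)) ≤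
      ∑' i, ENNReal.ofReal
        ((1 + occ i) * Real.log (1 + occ i) - occ i * Real.log (occ i)) ∧
    ∑' i, ENNReal.ofReal
        ((1 + (if i = 0 then (n : ℝ) else 0)) * Real.log (1 + (if i = 0 then (n : ℝ) else 0)) -
          (if i = 0 then (n : ℝ) else 0) * Real.log (if i = 0 then (n : ℝ) else 0)) =
      ENNReal.ofReal ((1 + (n : ℝ)) * Real.log (1 + (n : ℝ)) - (n : ℝ) * Real.log (n : ℝ)) := by
  have hn0 : (0 : ℝ) < n := by exact_mod_cast hn
  have hFn_pos : 0 < Fb n := by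
    have := Fb_strictMono Set.self_mem_Ici (le_of_lt hn0) hn0
    simpa [Fb_zero] using this
  -- second claim first
  have hle : ENNReal.ofReal (Fb n) ≤
      ∑' i, ENNReal.ofReal ((1 + occ i) * Real.log (1 + occ i) - occ i * Real.log (occ i)) := by
    set g : ℕ → ℝ := fun i => occ i * (Fb n / n) with hg
    have hgsum : HasSum g (Fb n) := by
      have h := hsum.mul_right (Fb n / n)
      rwa [show (n:ℝ) * (Fb n / n) = Fb n from by field_simp] at h
    have hgnn : ∀ i, 0 ≤ g i := fun i => by
      have := Fb_nonneg (h0 i) -- unused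
      exact mul_nonneg (h0 i) (div_nonneg hFn_pos.le hn0.le)
    have hpoint : ∀ i, g i ≤ Fb (occ i) := by
      intro i
      rcases eq_or_lt_of_le (h0 i) with h | h
      · simp [hg, ← h, Fb_zero]
      · have hile : occ i ≤ n := le_hasSum hsum i (fun j _ => h0 j)
        have := Fb_chord h hile
        calc g i = (occ i / n) * Fb n := by rw [hg]; ring
          _ ≤ Fb (occ i) := this
    calc ENNReal.ofReal (Fb n) = ENNReal.ofReal (∑' i, g i) := by rw [hgsum.tsum_eq]
      _ = ∑' i, ENNReal.ofReal (g i) :=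
          ENNReal.ofReal_tsum_of_nonneg hgnn hgsum.summable
      _ ≤ ∑' i, ENNReal.ofReal ((1 + occ i) * Real.log (1 + occ i) - occ i * Real.log (occ i)) :=
          ENNReal.tsum_le_tsum (fun i => ENNReal.ofReal_le_ofReal (hpoint i))
  refine ⟨lt_of_lt_of_le (by simpa [ENNReal.ofReal_pos] using hFn_pos) hle, hle, ?_⟩
  rw [tsum_eq_single 0]
  · simp
  · intro b hb
    simp [hb]
end
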